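/- For every positive integer s, the set of tuples q = (q_0, ..., q_5) ∈ ℤ^6 satisfying the Bazaikin freeness condition, the positive curvature condition, and |σ_3(q)| = 8s, is finite. (This is the arithmetic content of Corollary C(i): there are only finitely many positively curved Bazaikin spaces with a given cohomology ring, since H^6(B_q) = ℤ_s with 8s = |σ_3(q)|.) -/

import Mathlib

/-- The `k`-th elementary symmetric polynomial of the tuple `q`. -/
def esymm {n : ℕ} (k : ℕ) (q : Fin n → ℤ) : ℤ :=
  ∑ t ∈ Finset.univ.powersetCard k, ∏ i ∈ t, q i

/-- The Bazaikin freeness condition: the entries sum to zero, all entries are odd,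
and `gcd (q a + q b, q c + q d) = 2` for all pairwise distinct indices `a b c d`. -/
def BazaikinFree (q : Fin 6 → ℤ) : Prop :=
  (∑ i, q i) = 0 ∧ (∀ i, Odd (q i)) ∧
    ∀ a b c d : Fin 6, a ≠ b → a ≠ c → a ≠ d → b ≠ c → b ≠ d → c ≠ d →
      Int.gcd (q a + q b) (q c + q d) = 2

/-- The positive curvature condition: there is an index `i₀` such that
`q i + q j > 0` for all pairs `i < j` avoiding `i₀`, or `q i + q j < 0` for all such pairs. -/
def PosCurv (q : Fin 6 → ℤ) : Prop :=
  ∃ i₀ : Fin 6,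
    (∀ i j : Fin 6, i < j → i ≠ i₀ → j ≠ i₀ → 0 < q i + q j) ∨
    (∀ i j : Fin 6, i < j → i ≠ i₀ → j ≠ i₀ → q i + q j < 0)

set_option maxHeartbeats 4000000

lemma esymm3_eq (q : Fin 6 → ℤ) : esymm 3 q =
    q 0*q 1*q 2 + q 0*q 1*q 3 + q 0*q 1*q 4 + q 0*q 1*q 5 + q 0*q 2*q 3 + q 0*q 2*q 4 + q 0*q 2*q 5
    + q 0*q 3*q 4 + q 0*q 3*q 5 + q 0*q 4*q 5 + q 1*q 2*q 3 + q 1*q 2*q 4 + q 1*q 2*q 5 + q 1*q 3*q 4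
    + q 1*q 3*q 5 + q 1*q 4*q 5 + q 2*q 3*q 4 + q 2*q 3*q 5 + q 2*q 4*q 5 + q 3*q 4*q 5 := by
  unfold esymm
  rw [show (Finset.univ.powersetCard 3 : Finset (Finset (Fin 6))) =
    {{0,1,2},{0,1,3},{0,1,4},{0,1,5},{0,2,3},{0,2,4},{0,2,5},{0,3,4},{0,3,5},{0,4,5},
     {1,2,3},{1,2,4},{1,2,5},{1,3,4},{1,3,5},{1,4,5},{2,3,4},{2,3,5},{2,4,5},{3,4,5}} from by decide]
  simp (config := { decide := true }) only [Finset.sum_insert, Finset.prod_insert,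
    Finset.sum_singleton, Finset.prod_singleton, Finset.mem_insert, Finset.mem_singleton]
  ring


lemma Lg (b c d e f : ℤ) (hb : 1 ≤ b) (hc : 1 ≤ c) (hd : 1 ≤ d) (he : 1 ≤ e) (hf : 1 ≤ f) :
    b ≤ (b+c+d+e+f)*(b*c+b*d+b*e+b*f+c*d+c*e+c*f+d*e+d*f+e*f) - (b*c*d+b*c*e+b*c*f+b*d*e+b*d*f+b*e*f+c*d*e+c*d*f+c*e*f+d*e*f) ∧ b + c + d + e + f ≤ (b+c+d+e+f)*(b*c+b*d+b*e+b*f+c*d+c*e+c*f+d*e+d*f+e*f) - (b*c*d+b*c*e+b*c*f+b*d*e+b*d*f+b*e*f+c*d*e+c*d*f+c*e*f+d*e*f) := by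
  have hz0 : (0:ℤ) ≤ b - 1 := by linarith
  have hz1 : (0:ℤ) ≤ c - 1 := by linarith
  have hz2 : (0:ℤ) ≤ d - 1 := by linarith
  have hz3 : (0:ℤ) ≤ e - 1 := by linarith
  have hz4 : (0:ℤ) ≤ f - 1 := by linarith
  constructor <;> linarith [mul_nonneg hz0 hz0, mul_nonneg hz0 hz1, mul_nonneg hz0 hz2, mul_nonneg hz0 hz3, mul_nonneg hz0 hz4, mul_nonneg hz1 hz1, mul_nonneg hz1 hz2, mul_nonneg hz1 hz3, mul_nonneg hz1 hz4, mul_nonneg hz2 hz2, mul_nonneg hz2 hz3, mul_nonneg hz2 hz4, mul_nonneg hz3 hz3, mul_nonneg hz3 hz4, mul_nonneg hz4 hz4, mul_nonneg (mul_nonneg hz0 hz0) hz0, mul_nonneg (mul_nonneg hz0 hz0) hz1, mul_nonneg (mul_nonneg hz0 hz0) hz2, mul_nonneg (mul_nonneg hz0 hz0) hz3, mul_nonneg (mul_nonneg hz0 hz0) hz4, mul_nonneg (mul_nonneg hz0 hz1) hz1, mul_nonneg (mul_nonneg hz0 hz1) hz2, mul_nonneg (mul_nonneg hz0 hz1) hz3,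 mul_nonneg (mul_nonneg hz0 hz1) hz4, mul_nonneg (mul_nonneg hz0 hz2) hz2, mul_nonneg (mul_nonneg hz0 hz2) hz3, mul_nonneg (mul_nonneg hz0 hz2) hz4, mul_nonneg (mul_nonneg hz0 hz3) hz3, mul_nonneg (mul_nonneg hz0 hz3) hz4, mul_nonneg (mul_nonneg hz0 hz4) hz4, mul_nonneg (mul_nonneg hz1 hz1) hz1, mul_nonneg (mul_nonneg hz1 hz1) hz2, mul_nonneg (mul_nonneg hz1 hz1) hz3, mul_nonneg (mul_nonneg hz1 hz1) hz4, mul_nonneg (mul_nonneg hz1 hz2) hz2, mul_nonneg (mul_nonneg hz1 hz2) hz3, mul_nonneg (mul_nonneg hz1 hz2) hz4, mul_nonneg (mul_nonneg hz1 hz3) hz3, mul_nonneg (mul_nonneg hz1 hz3) hz4, mul_nonneg (mul_nonneg hz1 hz4) hz4, mul_nonneg (mul_nonneg hz2 hz2) hz2, mul_nonneg (mul_nonneg hz2 hz2) hz3, mul_nonneg (mul_nonneg hz2 hz2) hz4, mul_nonneg (mul_nonneg hz2 hz3) hz3, mul_nonneg (mul_nonneg hz2 hz3) hz4, mul_nonneg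 (mul_nonneg hz2 hz4) hz4, mul_nonneg (mul_nonneg hz3 hz3) hz3, mul_nonneg (mul_nonneg hz3 hz3) hz4, mul_nonneg (mul_nonneg hz3 hz4) hz4, mul_nonneg (mul_nonneg hz4 hz4) hz4]


lemma Mg (b c d e f : ℤ) (hf : f ≤ 0) (hbf : 1 ≤ b + f) (hcf : 1 ≤ c + f)
    (hdf : 1 ≤ d + f) (hef : 1 ≤ e + f) :
    b ≤ (b+c+d+e+f)*(b*c+b*d+b*e+b*f+c*d+c*e+c*f+d*e+d*f+e*f) - (b*c*d+b*c*e+b*c*f+b*d*e+b*d*f+b*e*f+c*d*e+c*d*f+c*e*f+d*e*f) ∧ b + c + d + e + f ≤ (b+c+d+e+f)*(b*c+b*d+b*e+b*f+c*d+c*e+c*f+d*e+d*f+e*f) - (b*c*d+b*c*e+b*c*f+b*d*e+b*d*f+b*e*f+c*d*e+c*d*f+c*e*f+d*e*f) ∧ 1 ≤ (b+c+d+e+f)*(b*c+b*d+b*e+b*f+c*d+c*e+c*f+d*e+d*f+e*f) - (b*c*d+b*c*e+b*c*f+b*d*e+b*d*f+b*e*f+c*d*e+c*d*f+c*e*f+d*e*f)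 := by
  have hz0 : (0:ℤ) ≤ -f := by linarith
  have hz1 : (0:ℤ) ≤ b - 1 + f := by linarith
  have hz2 : (0:ℤ) ≤ c - 1 + f := by linarith
  have hz3 : (0:ℤ) ≤ d - 1 + f := by linarith
  have hz4 : (0:ℤ) ≤ e - 1 + f := by linarith
  refine ⟨?_, ?_, ?_⟩ <;> linarith [mul_nonneg hz0 hz0, mul_nonneg hz0 hz1, mul_nonneg hz0 hz2, mul_nonneg hz0 hz3, mul_nonneg hz0 hz4, mul_nonneg hz1 hz1, mul_nonneg hz1 hz2, mul_nonneg hz1 hz3, mul_nonneg hz1 hz4, mul_nonneg hz2 hz2, mul_nonneg hz2 hz3, mul_nonneg hz2 hz4, mul_nonneg hz3 hz3, mul_nonneg hz3 hz4, mul_nonneg hz4 hz4, mul_nonneg (mul_nonneg hz0 hz0) hz0, mul_nonneg (mul_nonneg hz0 hz0) hz1, mul_nonneg (mul_nonneg hz0 hz0) hz2, mul_nonneg (mul_nonneg hz0 hz0) hz3, mul_nonneg (mul_nonneg hz0 hz0) hz4, mul_nonneg (mul_nonneg hz0 hz1) hz1, mul_nonneg (mul_nonneg hz0 hz1) hz2,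 mul_nonneg (mul_nonneg hz0 hz1) hz3, mul_nonneg (mul_nonneg hz0 hz1) hz4, mul_nonneg (mul_nonneg hz0 hz2) hz2, mul_nonneg (mul_nonneg hz0 hz2) hz3, mul_nonneg (mul_nonneg hz0 hz2) hz4, mul_nonneg (mul_nonneg hz0 hz3) hz3, mul_nonneg (mul_nonneg hz0 hz3) hz4, mul_nonneg (mul_nonneg hz0 hz4) hz4, mul_nonneg (mul_nonneg hz1 hz1) hz1, mul_nonneg (mul_nonneg hz1 hz1) hz2, mul_nonneg (mul_nonneg hz1 hz1) hz3, mul_nonneg (mul_nonneg hz1 hz1) hz4, mul_nonneg (mul_nonneg hz1 hz2) hz2, mul_nonneg (mul_nonneg hz1 hz2) hz3, mul_nonneg (mul_nonneg hz1 hz2) hz4, mul_nonneg (mul_nonneg hz1 hz3) hz3, mul_nonneg (mul_nonneg hz1 hz3) hz4, mul_nonneg (mul_nonneg hz1 hz4) hz4, mul_nonneg (mul_nonneg hz2 hz2) hz2, mul_nonneg (mul_nonneg hz2 hz2) hz3, mul_nonneg (mul_nonneg hz2 hz2) hz4, mul_nonneg (mul_nonneg hz2 hz3) hz3, mul_nonneg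 (mul_nonneg hz2 hz3) hz4, mul_nonneg (mul_nonneg hz2 hz4) hz4, mul_nonneg (mul_nonneg hz3 hz3) hz3, mul_nonneg (mul_nonneg hz3 hz3) hz4, mul_nonneg (mul_nonneg hz3 hz4) hz4, mul_nonneg (mul_nonneg hz4 hz4) hz4]


lemma fiveBound (b c d e f : ℤ) (hbc : 1 ≤ b + c) (hbd : 1 ≤ b + d) (hbe : 1 ≤ b + e) (hbf : 1 ≤ b + f) (hcd : 1 ≤ c + d) (hce : 1 ≤ c + e) (hcf : 1 ≤ c + f) (hde : 1 ≤ d + e) (hdf : 1 ≤ d + f) (hef : 1 ≤ e + f) :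
    b ≤ (b+c+d+e+f)*(b*c+b*d+b*e+b*f+c*d+c*e+c*f+d*e+d*f+e*f) - (b*c*d+b*c*e+b*c*f+b*d*e+b*d*f+b*e*f+c*d*e+c*d*f+c*e*f+d*e*f) ∧ c ≤ (b+c+d+e+f)*(b*c+b*d+b*e+b*f+c*d+c*e+c*f+d*e+d*f+e*f) - (b*c*d+b*c*e+b*c*f+b*d*e+b*d*f+b*e*f+c*d*e+c*d*f+c*e*f+d*e*f) ∧ d ≤ (b+c+d+e+f)*(b*c+b*d+b*e+b*f+c*d+c*e+c*f+d*e+d*f+e*f) - (b*c*d+b*c*e+b*c*f+b*d*e+b*d*f+b*e*f+c*d*e+c*d*f+c*e*f+d*e*f) ∧ e ≤ (b+c+d+e+f)*(b*c+b*d+b*e+b*f+c*d+c*e+c*f+d*e+d*f+e*f) - (b*c*d+b*c*e+b*c*f+b*d*e+b*d*f+b*e*f+c*d*e+c*d*f+c*e*f+d*e*f) ∧ f ≤ (b+c+d+e+f)*(b*c+b*d+b*e+b*f+c*d+c*e+c*f+d*e+d*f+e*f) - (b*c*d+b*c*e+b*c*f+b*d*e+b*d*f+b*e*f+c*d*e+c*d*f+c*e*f+d*e*f)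 ∧ b + c + d + e + f ≤ (b+c+d+e+f)*(b*c+b*d+b*e+b*f+c*d+c*e+c*f+d*e+d*f+e*f) - (b*c*d+b*c*e+b*c*f+b*d*e+b*d*f+b*e*f+c*d*e+c*d*f+c*e*f+d*e*f) ∧ 1 ≤ (b+c+d+e+f)*(b*c+b*d+b*e+b*f+c*d+c*e+c*f+d*e+d*f+e*f) - (b*c*d+b*c*e+b*c*f+b*d*e+b*d*f+b*e*f+c*d*e+c*d*f+c*e*f+d*e*f) := by
  rcases le_or_gt f 0 with hneg | hposf
  · have Ab := Mg b c d e f hneg (by linarith : 1 ≤ b + f) (by linarith : 1 ≤ c + f) (by linarith : 1 ≤ d + f) (by linarith : 1 ≤ e + f)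
    have Ac := Mg c b d e f hneg (by linarith : 1 ≤ c + f) (by linarith : 1 ≤ b + f) (by linarith : 1 ≤ d + f) (by linarith : 1 ≤ e + f)
    have Ad := Mg d b c e f hneg (by linarith : 1 ≤ d + f) (by linarith : 1 ≤ b + f) (by linarith : 1 ≤ c + f) (by linarith : 1 ≤ e + f)
    have Ae := Mg e b c d f hneg (by linarith : 1 ≤ e + f) (by linarith : 1 ≤ b + f) (by linarith : 1 ≤ c + f) (by linarith : 1 ≤ d + f)
    exact ⟨by linarith [Ab.1], by linarith [Ac.1], by linarith [Ad.1], by linarith [Ae.1], by linarith [Ab.2.2], by linarith [Ab.2.1], by linarith [Ab.2.2]⟩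
  rcases le_or_gt e 0 with hneg | hpose
  · have Ab := Mg b c d f e hneg (by linarith : 1 ≤ b + e) (by linarith : 1 ≤ c + e) (by linarith : 1 ≤ d + e) (by linarith : 1 ≤ f + e)
    have Ac := Mg c b d f e hneg (by linarith : 1 ≤ c + e) (by linarith : 1 ≤ b + e) (by linarith : 1 ≤ d + e) (by linarith : 1 ≤ f + e)
    have Ad := Mg d b c f e hneg (by linarith : 1 ≤ d + e) (by linarith : 1 ≤ b + e) (by linarith : 1 ≤ c + e) (by linarith : 1 ≤ f + e)
    have Af := Mg f b c d e hneg (by linarith : 1 ≤ f + e) (by linarith : 1 ≤ b + e) (by linarith : 1 ≤ c + e) (by linarith : 1 ≤ d + e)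
    exact ⟨by linarith [Ab.1], by linarith [Ac.1], by linarith [Ad.1], by linarith [Ab.2.2], by linarith [Af.1], by linarith [Ab.2.1], by linarith [Ab.2.2]⟩
  rcases le_or_gt d 0 with hneg | hposd
  · have Ab := Mg b c e f d hneg (by linarith : 1 ≤ b + d) (by linarith : 1 ≤ c + d) (by linarith : 1 ≤ e + d) (by linarith : 1 ≤ f + d)
    have Ac := Mg c b e f d hneg (by linarith : 1 ≤ c + d) (by linarith : 1 ≤ b + d) (by linarith : 1 ≤ e + d) (by linarith : 1 ≤ f + d)
    have Ae := Mg e b c f d hneg (by linarith : 1 ≤ e + d) (by linarith : 1 ≤ b + d) (by linarith : 1 ≤ c + d) (by linarith : 1 ≤ f + d)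
    have Af := Mg f b c e d hneg (by linarith : 1 ≤ f + d) (by linarith : 1 ≤ b + d) (by linarith : 1 ≤ c + d) (by linarith : 1 ≤ e + d)
    exact ⟨by linarith [Ab.1], by linarith [Ac.1], by linarith [Ab.2.2], by linarith [Ae.1], by linarith [Af.1], by linarith [Ab.2.1], by linarith [Ab.2.2]⟩
  rcases le_or_gt c 0 with hneg | hposc
  · have Ab := Mg b d e f c hneg (by linarith : 1 ≤ b + c) (by linarith : 1 ≤ d + c) (by linarith : 1 ≤ e + c) (by linarith : 1 ≤ f + c)
    have Ad := Mg d b e f c hneg (by linarith : 1 ≤ d + c) (by linarith : 1 ≤ b + c) (by linarith : 1 ≤ e + c) (by linarith : 1 ≤ f + c)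
    have Ae := Mg e b d f c hneg (by linarith : 1 ≤ e + c) (by linarith : 1 ≤ b + c) (by linarith : 1 ≤ d + c) (by linarith : 1 ≤ f + c)
    have Af := Mg f b d e c hneg (by linarith : 1 ≤ f + c) (by linarith : 1 ≤ b + c) (by linarith : 1 ≤ d + c) (by linarith : 1 ≤ e + c)
    exact ⟨by linarith [Ab.1], by linarith [Ab.2.2], by linarith [Ad.1], by linarith [Ae.1], by linarith [Af.1], by linarith [Ab.2.1], by linarith [Ab.2.2]⟩
  rcases le_or_gt b 0 with hneg | hposb
  · have Ac := Mg c d e f b hneg (by linarith : 1 ≤ c + b) (by linarith : 1 ≤ d + b) (by linarith : 1 ≤ e + b) (by linarith : 1 ≤ f + b)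
    have Ad := Mg d c e f b hneg (by linarith : 1 ≤ d + b) (by linarith : 1 ≤ c + b) (by linarith : 1 ≤ e + b) (by linarith : 1 ≤ f + b)
    have Ae := Mg e c d f b hneg (by linarith : 1 ≤ e + b) (by linarith : 1 ≤ c + b) (by linarith : 1 ≤ d + b) (by linarith : 1 ≤ f + b)
    have Af := Mg f c d e b hneg (by linarith : 1 ≤ f + b) (by linarith : 1 ≤ c + b) (by linarith : 1 ≤ d + b) (by linarith : 1 ≤ e + b)
    exact ⟨by linarith [Ac.2.2], by linarith [Ac.1], by linarith [Ad.1], by linarith [Ae.1], by linarith [Af.1], by linarith [Ac.2.1], by linarith [Ac.2.2]⟩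
  have Ab := Lg b c d e f (by omega) (by omega) (by omega) (by omega) (by omega)
  have Ac := Lg c b d e f (by omega) (by omega) (by omega) (by omega) (by omega)
  have Ad := Lg d b c e f (by omega) (by omega) (by omega) (by omega) (by omega)
  have Ae := Lg e b c d f (by omega) (by omega) (by omega) (by omega) (by omega)
  have Af := Lg f b c d e (by omega) (by omega) (by omega) (by omega) (by omega)
  exact ⟨by linarith [Ab.1], by linarith [Ac.1], by linarith [Ad.1], by linarith [Ae.1], by linarith [Af.1], by linarith [Ab.2], by linarith [Ab.1]⟩


lemma bound_pos (q : Fin 6 → ℤ) (hsum : ∑ i, q i = 0) (i₀ : Fin 6)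
    (h : ∀ i j : Fin 6, i < j → i ≠ i₀ → j ≠ i₀ → 0 < q i + q j) :
    esymm 3 q ≤ -1 ∧ ∀ i, |q i| ≤ -esymm 3 q := by
  have hs6 : q 0 + q 1 + q 2 + q 3 + q 4 + q 5 = 0 := by
    have := hsum; rw [Fin.sum_univ_six] at this; linarith
  simp only [esymm3_eq]
  fin_cases i₀
  · have p12 : (1:ℤ) ≤ q 1 + q 2 := by have := h 1 2 (by decide) (by decide) (by decide); omega
    have p13 : (1:ℤ) ≤ q 1 + q 3 := by have := h 1 3 (by decide) (by decide) (by decide); omega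
    have p14 : (1:ℤ) ≤ q 1 + q 4 := by have := h 1 4 (by decide) (by decide) (by decide); omega
    have p15 : (1:ℤ) ≤ q 1 + q 5 := by have := h 1 5 (by decide) (by decide) (by decide); omega
    have p23 : (1:ℤ) ≤ q 2 + q 3 := by have := h 2 3 (by decide) (by decide) (by decide); omega
    have p24 : (1:ℤ) ≤ q 2 + q 4 := by have := h 2 4 (by decide) (by decide) (by decide); omega
    have p25 : (1:ℤ) ≤ q 2 + q 5 := by have := h 2 5 (by decide) (by decide) (by decide); omega
    have p34 : (1:ℤ) ≤ q 3 + q 4 := by have := h 3 4 (by decide) (by decide) (by decide); omega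
    have p35 : (1:ℤ) ≤ q 3 + q 5 := by have := h 3 5 (by decide) (by decide) (by decide); omega
    have p45 : (1:ℤ) ≤ q 4 + q 5 := by have := h 4 5 (by decide) (by decide) (by decide); omega
    have key : (q 0 + q 1 + q 2 + q 3 + q 4 + q 5) * (q 1*q 2+q 1*q 3+q 1*q 4+q 1*q 5+q 2*q 3+q 2*q 4+q 2*q 5+q 3*q 4+q 3*q 5+q 4*q 5) = 0 := mul_eq_zero_of_left hs6 _
    obtain ⟨B1, B2, B3, B4, B5, BS, BO⟩ := fiveBound (q 1) (q 2) (q 3) (q 4) (q 5) p12 p13 p14 p15 p23 p24 p25 p34 p35 p45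
    refine ⟨by linarith, ?_⟩
    intro i
    have hi : i = 0 ∨ i = 1 ∨ i = 2 ∨ i = 3 ∨ i = 4 ∨ i = 5 := by revert i; decide
    rcases hi with rfl|rfl|rfl|rfl|rfl|rfl <;> (rw [abs_le]; exact ⟨by linarith, by linarith⟩)
  · have p02 : (1:ℤ) ≤ q 0 + q 2 := by have := h 0 2 (by decide) (by decide) (by decide); omega
    have p03 : (1:ℤ) ≤ q 0 + q 3 := by have := h 0 3 (by decide) (by decide) (by decide); omega
    have p04 : (1:ℤ) ≤ q 0 + q 4 := by have := h 0 4 (by decide) (by decide) (by decide); omega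
    have p05 : (1:ℤ) ≤ q 0 + q 5 := by have := h 0 5 (by decide) (by decide) (by decide); omega
    have p23 : (1:ℤ) ≤ q 2 + q 3 := by have := h 2 3 (by decide) (by decide) (by decide); omega
    have p24 : (1:ℤ) ≤ q 2 + q 4 := by have := h 2 4 (by decide) (by decide) (by decide); omega
    have p25 : (1:ℤ) ≤ q 2 + q 5 := by have := h 2 5 (by decide) (by decide) (by decide); omega
    have p34 : (1:ℤ) ≤ q 3 + q 4 := by have := h 3 4 (by decide) (by decide) (by decide); omega
    have p35 : (1:ℤ) ≤ q 3 + q 5 := by have := h 3 5 (by decide) (by decide) (by decide); omega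
    have p45 : (1:ℤ) ≤ q 4 + q 5 := by have := h 4 5 (by decide) (by decide) (by decide); omega
    have key : (q 0 + q 1 + q 2 + q 3 + q 4 + q 5) * (q 0*q 2+q 0*q 3+q 0*q 4+q 0*q 5+q 2*q 3+q 2*q 4+q 2*q 5+q 3*q 4+q 3*q 5+q 4*q 5) = 0 := mul_eq_zero_of_left hs6 _
    obtain ⟨B1, B2, B3, B4, B5, BS, BO⟩ := fiveBound (q 0) (q 2) (q 3) (q 4) (q 5) p02 p03 p04 p05 p23 p24 p25 p34 p35 p45
    refine ⟨by linarith, ?_⟩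
    intro i
    have hi : i = 0 ∨ i = 1 ∨ i = 2 ∨ i = 3 ∨ i = 4 ∨ i = 5 := by revert i; decide
    rcases hi with rfl|rfl|rfl|rfl|rfl|rfl <;> (rw [abs_le]; exact ⟨by linarith, by linarith⟩)
  · have p01 : (1:ℤ) ≤ q 0 + q 1 := by have := h 0 1 (by decide) (by decide) (by decide); omega
    have p03 : (1:ℤ) ≤ q 0 + q 3 := by have := h 0 3 (by decide) (by decide) (by decide); omega
    have p04 : (1:ℤ) ≤ q 0 + q 4 := by have := h 0 4 (by decide) (by decide) (by decide); omega
    have p05 : (1:ℤ) ≤ q 0 + q 5 := by have := h 0 5 (by decide) (by decide) (by decide); omega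
    have p13 : (1:ℤ) ≤ q 1 + q 3 := by have := h 1 3 (by decide) (by decide) (by decide); omega
    have p14 : (1:ℤ) ≤ q 1 + q 4 := by have := h 1 4 (by decide) (by decide) (by decide); omega
    have p15 : (1:ℤ) ≤ q 1 + q 5 := by have := h 1 5 (by decide) (by decide) (by decide); omega
    have p34 : (1:ℤ) ≤ q 3 + q 4 := by have := h 3 4 (by decide) (by decide) (by decide); omega
    have p35 : (1:ℤ) ≤ q 3 + q 5 := by have := h 3 5 (by decide) (by decide) (by decide); omega
    have p45 : (1:ℤ) ≤ q 4 + q 5 := by have := h 4 5 (by decide) (by decide) (by decide); omega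
    have key : (q 0 + q 1 + q 2 + q 3 + q 4 + q 5) * (q 0*q 1+q 0*q 3+q 0*q 4+q 0*q 5+q 1*q 3+q 1*q 4+q 1*q 5+q 3*q 4+q 3*q 5+q 4*q 5) = 0 := mul_eq_zero_of_left hs6 _
    obtain ⟨B1, B2, B3, B4, B5, BS, BO⟩ := fiveBound (q 0) (q 1) (q 3) (q 4) (q 5) p01 p03 p04 p05 p13 p14 p15 p34 p35 p45
    refine ⟨by linarith, ?_⟩
    intro i
    have hi : i = 0 ∨ i = 1 ∨ i = 2 ∨ i = 3 ∨ i = 4 ∨ i = 5 := by revert i; decide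
    rcases hi with rfl|rfl|rfl|rfl|rfl|rfl <;> (rw [abs_le]; exact ⟨by linarith, by linarith⟩)
  · have p01 : (1:ℤ) ≤ q 0 + q 1 := by have := h 0 1 (by decide) (by decide) (by decide); omega
    have p02 : (1:ℤ) ≤ q 0 + q 2 := by have := h 0 2 (by decide) (by decide) (by decide); omega
    have p04 : (1:ℤ) ≤ q 0 + q 4 := by have := h 0 4 (by decide) (by decide) (by decide); omega
    have p05 : (1:ℤ) ≤ q 0 + q 5 := by have := h 0 5 (by decide) (by decide) (by decide); omega
    have p12 : (1:ℤ) ≤ q 1 + q 2 := by have := h 1 2 (by decide) (by decide) (by decide); omega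
    have p14 : (1:ℤ) ≤ q 1 + q 4 := by have := h 1 4 (by decide) (by decide) (by decide); omega
    have p15 : (1:ℤ) ≤ q 1 + q 5 := by have := h 1 5 (by decide) (by decide) (by decide); omega
    have p24 : (1:ℤ) ≤ q 2 + q 4 := by have := h 2 4 (by decide) (by decide) (by decide); omega
    have p25 : (1:ℤ) ≤ q 2 + q 5 := by have := h 2 5 (by decide) (by decide) (by decide); omega
    have p45 : (1:ℤ) ≤ q 4 + q 5 := by have := h 4 5 (by decide) (by decide) (by decide); omega
    have key : (q 0 + q 1 + q 2 + q 3 + q 4 + q 5) * (q 0*q 1+q 0*q 2+q 0*q 4+q 0*q 5+q 1*q 2+q 1*q 4+q 1*q 5+q 2*q 4+q 2*q 5+q 4*q 5) = 0 := mul_eq_zero_of_left hs6 _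
    obtain ⟨B1, B2, B3, B4, B5, BS, BO⟩ := fiveBound (q 0) (q 1) (q 2) (q 4) (q 5) p01 p02 p04 p05 p12 p14 p15 p24 p25 p45
    refine ⟨by linarith, ?_⟩
    intro i
    have hi : i = 0 ∨ i = 1 ∨ i = 2 ∨ i = 3 ∨ i = 4 ∨ i = 5 := by revert i; decide
    rcases hi with rfl|rfl|rfl|rfl|rfl|rfl <;> (rw [abs_le]; exact ⟨by linarith, by linarith⟩)
  · have p01 : (1:ℤ) ≤ q 0 + q 1 := by have := h 0 1 (by decide) (by decide) (by decide); omega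
    have p02 : (1:ℤ) ≤ q 0 + q 2 := by have := h 0 2 (by decide) (by decide) (by decide); omega
    have p03 : (1:ℤ) ≤ q 0 + q 3 := by have := h 0 3 (by decide) (by decide) (by decide); omega
    have p05 : (1:ℤ) ≤ q 0 + q 5 := by have := h 0 5 (by decide) (by decide) (by decide); omega
    have p12 : (1:ℤ) ≤ q 1 + q 2 := by have := h 1 2 (by decide) (by decide) (by decide); omega
    have p13 : (1:ℤ) ≤ q 1 + q 3 := by have := h 1 3 (by decide) (by decide) (by decide); omega
    have p15 : (1:ℤ) ≤ q 1 + q 5 := by have := h 1 5 (by decide) (by decide) (by decide); omega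
    have p23 : (1:ℤ) ≤ q 2 + q 3 := by have := h 2 3 (by decide) (by decide) (by decide); omega
    have p25 : (1:ℤ) ≤ q 2 + q 5 := by have := h 2 5 (by decide) (by decide) (by decide); omega
    have p35 : (1:ℤ) ≤ q 3 + q 5 := by have := h 3 5 (by decide) (by decide) (by decide); omega
    have key : (q 0 + q 1 + q 2 + q 3 + q 4 + q 5) * (q 0*q 1+q 0*q 2+q 0*q 3+q 0*q 5+q 1*q 2+q 1*q 3+q 1*q 5+q 2*q 3+q 2*q 5+q 3*q 5) = 0 := mul_eq_zero_of_left hs6 _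
    obtain ⟨B1, B2, B3, B4, B5, BS, BO⟩ := fiveBound (q 0) (q 1) (q 2) (q 3) (q 5) p01 p02 p03 p05 p12 p13 p15 p23 p25 p35
    refine ⟨by linarith, ?_⟩
    intro i
    have hi : i = 0 ∨ i = 1 ∨ i = 2 ∨ i = 3 ∨ i = 4 ∨ i = 5 := by revert i; decide
    rcases hi with rfl|rfl|rfl|rfl|rfl|rfl <;> (rw [abs_le]; exact ⟨by linarith, by linarith⟩)
  · have p01 : (1:ℤ) ≤ q 0 + q 1 := by have := h 0 1 (by decide) (by decide) (by decide); omega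
    have p02 : (1:ℤ) ≤ q 0 + q 2 := by have := h 0 2 (by decide) (by decide) (by decide); omega
    have p03 : (1:ℤ) ≤ q 0 + q 3 := by have := h 0 3 (by decide) (by decide) (by decide); omega
    have p04 : (1:ℤ) ≤ q 0 + q 4 := by have := h 0 4 (by decide) (by decide) (by decide); omega
    have p12 : (1:ℤ) ≤ q 1 + q 2 := by have := h 1 2 (by decide) (by decide) (by decide); omega
    have p13 : (1:ℤ) ≤ q 1 + q 3 := by have := h 1 3 (by decide) (by decide) (by decide); omega
    have p14 : (1:ℤ) ≤ q 1 + q 4 := by have := h 1 4 (by decide) (by decide) (by decide); omega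
    have p23 : (1:ℤ) ≤ q 2 + q 3 := by have := h 2 3 (by decide) (by decide) (by decide); omega
    have p24 : (1:ℤ) ≤ q 2 + q 4 := by have := h 2 4 (by decide) (by decide) (by decide); omega
    have p34 : (1:ℤ) ≤ q 3 + q 4 := by have := h 3 4 (by decide) (by decide) (by decide); omega
    have key : (q 0 + q 1 + q 2 + q 3 + q 4 + q 5) * (q 0*q 1+q 0*q 2+q 0*q 3+q 0*q 4+q 1*q 2+q 1*q 3+q 1*q 4+q 2*q 3+q 2*q 4+q 3*q 4) = 0 := mul_eq_zero_of_left hs6 _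
    obtain ⟨B1, B2, B3, B4, B5, BS, BO⟩ := fiveBound (q 0) (q 1) (q 2) (q 3) (q 4) p01 p02 p03 p04 p12 p13 p14 p23 p24 p34
    refine ⟨by linarith, ?_⟩
    intro i
    have hi : i = 0 ∨ i = 1 ∨ i = 2 ∨ i = 3 ∨ i = 4 ∨ i = 5 := by revert i; decide
    rcases hi with rfl|rfl|rfl|rfl|rfl|rfl <;> (rw [abs_le]; exact ⟨by linarith, by linarith⟩)


lemma bound_all (q : Fin 6 → ℤ) (hsum : ∑ i, q i = 0) (hc : PosCurv q) :
    ∀ i, |q i| ≤ |esymm 3 q| := by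
  obtain ⟨i₀, hp | hn⟩ := hc
  · obtain ⟨h1, h2⟩ := bound_pos q hsum i₀ hp
    intro i
    calc |q i| ≤ -esymm 3 q := h2 i
    _ = |esymm 3 q| := (abs_of_neg (by linarith)).symm
  · obtain ⟨h1, h2⟩ := bound_pos (fun i => -q i)
      (by rw [Finset.sum_neg_distrib, hsum, neg_zero])
      i₀ (fun i j hij hi hj => by have := hn i j hij hi hj; linarith)
    have he : esymm 3 (fun i => -q i) = -esymm 3 q := by
      rw [esymm3_eq q, esymm3_eq (fun i => -q i)]; ring
    rw [he] at h1 h2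
    intro i
    have h3 := h2 i
    simp only [abs_neg, neg_neg] at h3
    calc |q i| ≤ esymm 3 q := h3
    _ = |esymm 3 q| := (abs_of_pos (by linarith)).symm

theorem finitely_many_posCurved_Bazaikin_with_given_order (s : ℕ) (hs : 0 < s) :
    {q : Fin 6 → ℤ | BazaikinFree q ∧ PosCurv q ∧ |esymm 3 q| = 8 * (s : ℤ)}.Finite := by
  apply Set.Finite.subset
    (Set.Finite.pi (fun i : Fin 6 => Set.finite_Icc (-(8*(s:ℤ))) (8*(s:ℤ))))
  rintro q ⟨⟨hsum, -, -⟩, hcurv, habs⟩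
  intro i _
  have hb := bound_all q hsum hcurv i
  rw [habs, abs_le] at hb
  exact Set.mem_Icc.mpr hb
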